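/- Let A be a unital C*-algebra and let w : [0,1] → A be a continuous path of unitaries in A which is rectifiable of length r ≤ π/2, i.e., the supremum over all partitions 0 = t_0 < t_1 < … < t_k = 1 of the sums Σ_{i} ‖w(t_{i+1}) − w(t_i)‖ equals r. Then for every λ in the spectrum of w(0) there exists a continuous function t ↦ λ(t) from [0,1] into the unit circle of ℂ such that λ(0) = λ, λ(t) belongs to the spectrum of w(t) for every t ∈ [0,1], and the length of the path t ↦ λ(t) (the supremum over all partitions of Σ_i |λ(t_{i+1}) − λ(t_i)|) is at most r. -/

import Mathlib

open scoped ENNReal Topology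
open Set Filter

noncomputable section SpectrumPathSelection

section Spectral
variable {A : Type*} [CStarAlgebra A]

lemma myIsStarNormal_sub (v : A) (hv : v ∈ unitary A) (μ : ℂ) :
    IsStarNormal (algebraMap ℂ A μ - v) := by
  constructor
  have hc : Commute (star v) v := (isStarNormal_of_mem_unitary hv).star_comm_self
  have h1 : Commute (algebraMap ℂ A (star μ)) (algebraMap ℂ A μ - v) :=
    (Algebra.commute_algebraMap_left _ _).sub_right (Algebra.commute_algebraMap_left _ _)
  have h2 : Commute (star v) (algebraMap ℂ A μ - v) :=
    ((Algebra.commute_algebraMap_left μ (star v)).symm).sub_right hc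
  have := h1.sub_left h2
  rwa [star_sub, ← algebraMap_star_comm]

lemma myIsStarNormal_inv (B : Aˣ) (h : IsStarNormal (B : A)) : IsStarNormal (↑B⁻¹ : A) := by
  constructor
  have hB : Commute ((star B : Aˣ) : A) ((B : Aˣ) : A) := by
    rw [Units.coe_star]; exact h.star_comm_self
  have := (hB.units_inv_left).units_inv_right
  rwa [Units.coe_star_inv] at this

lemma exists_near_spectrum [Nontrivial A] {u v : A} (hu : u ∈ unitary A) (hv : v ∈ unitary A)
    {μ : ℂ} (hμ : μ ∈ spectrum ℂ u) :
    ∃ ν ∈ spectrum ℂ v, dist μ ν ≤ ‖u - v‖ := by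
  have hne : (spectrum ℂ v).Nonempty := spectrum.nonempty v
  obtain ⟨ν, hν, hd⟩ := (spectrum.isCompact v).exists_infDist_eq_dist hne μ
  refine ⟨ν, hν, ?_⟩
  rw [← hd]
  by_contra hlt
  push_neg at hlt
  set d : ℝ := Metric.infDist μ (spectrum ℂ v) with hd'
  have hd0 : 0 < d := lt_of_le_of_lt (norm_nonneg _) hlt
  have hμv : μ ∉ spectrum ℂ v := by
    intro hmem
    have : d ≤ 0 := by
      rw [hd']
      simpa using Metric.infDist_le_dist_of_mem (x := μ) hmem
    linarith
  rw [spectrum.notMem_iff] at hμv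
  obtain ⟨B, hB⟩ := hμv
  have hnormal : IsStarNormal (B : A) := hB ▸ myIsStarNormal_sub v hv μ
  have hnormalinv : IsStarNormal (↑B⁻¹ : A) := myIsStarNormal_inv B hnormal
  -- bound the norm of the inverse
  have hspec : ∀ z ∈ spectrum ℂ (↑B⁻¹ : A), ‖z‖ ≤ d⁻¹ := by
    intro z hz
    have hz0 : z ≠ 0 := by
      intro h0
      rw [h0] at hz
      exact (spectrum.zero_notMem_iff ℂ).mpr (B⁻¹).isUnit hz
    have hzinv : (↑(Units.mk0 z hz0)⁻¹ : ℂ) ∈ spectrum ℂ ((↑(B⁻¹)⁻¹ : Aˣ) : A) :=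
      spectrum.inv_mem_iff.mp hz
    simp only [inv_inv, Units.val_inv_eq_inv_val, Units.val_mk0] at hzinv
    rw [hB] at hzinv
    rw [← spectrum.singleton_sub_eq] at hzinv
    obtain ⟨x, hx, y, hy, hxy⟩ := hzinv
    simp only [mem_singleton_iff] at hx
    have hxy' : μ - y = z⁻¹ := by rw [← hx]; exact hxy
    have hdy : d ≤ ‖z⁻¹‖ := by
      have h3 := Metric.infDist_le_dist_of_mem (x := μ) hy
      rw [← hd'] at h3
      calc d ≤ dist μ y := h3
      _ = ‖z⁻¹‖ := by rw [dist_eq_norm, hxy']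
    rw [norm_inv] at hdy
    rw [← inv_inv ‖z‖]
    exact inv_anti₀ hd0 hdy
  have hBinv : ‖(↑B⁻¹ : A)‖ ≤ d⁻¹ := by
    have h1 : spectralRadius ℂ (↑B⁻¹ : A) = ‖(↑B⁻¹ : A)‖₊ :=
      IsStarNormal.spectralRadius_eq_nnnorm _
    have h2 : spectralRadius ℂ (↑B⁻¹ : A) ≤ ENNReal.ofReal d⁻¹ := by
      rw [spectralRadius]
      refine iSup₂_le fun z hz => ?_
      rw [← ENNReal.ofReal_coe_nnreal, coe_nnnorm]
      exact ENNReal.ofReal_le_ofReal (hspec z hz)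
    rw [h1] at h2
    have := ENNReal.toReal_mono (by simp) h2
    rwa [ENNReal.coe_toReal, coe_nnnorm, ENNReal.toReal_ofReal (by positivity)] at this
  -- now show μ ∉ spectrum u
  have hsmall : ‖(↑B⁻¹ : A) * (u - v)‖ < 1 := by
    calc ‖(↑B⁻¹ : A) * (u - v)‖ ≤ ‖(↑B⁻¹ : A)‖ * ‖u - v‖ := norm_mul_le _ _
    _ ≤ d⁻¹ * ‖u - v‖ := by
        apply mul_le_mul_of_nonneg_right hBinv (norm_nonneg _)
    _ < d⁻¹ * d := by
        apply mul_lt_mul_of_pos_left hlt (by positivity)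
    _ = 1 := inv_mul_cancel₀ hd0.ne'
  have hunit : IsUnit (algebraMap ℂ A μ - u) := by
    have : algebraMap ℂ A μ - u = ↑B * (1 - (↑B⁻¹ : A) * (u - v)) := by
      rw [mul_sub, mul_one, ← mul_assoc]
      rw [Units.mul_inv, one_mul, hB]
      abel
    rw [this]
    exact B.isUnit.mul ((Units.oneSub _ hsmall)).isUnit
  exact (spectrum.notMem_iff.mpr hunit) hμ

end Spectral

section Var
variable {α : Type*} [LinearOrder α] [TopologicalSpace α] [OrderTopology α] [DenselyOrdered α]
  {E : Type*} [PseudoEMetricSpace E]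

lemma evar_right_small {f : α → E} (hf : Continuous f) {a b : α} (hab : a < b)
    (hfin : eVariationOn f (Icc a b) ≠ ⊤) {ε : ℝ≥0∞} (hε : 0 < ε) :
    ∃ c, a < c ∧ c ≤ b ∧ eVariationOn f (Icc a c) ≤ 2 * ε := by
  set V := eVariationOn f (Icc a b) with hV
  by_cases hVsmall : V < ε
  · exact ⟨b, hab, le_rfl, le_trans hVsmall.le (le_mul_of_one_le_left zero_le one_le_two)⟩
  push_neg at hVsmall
  -- obtain a partition whose sum is within ε of V
  have hex : ∃ p : ℕ × { u : ℕ → α // Monotone u ∧ ∀ i, u i ∈ Icc a b },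
      V < (∑ i ∈ Finset.range p.1, edist (f (p.2.1 (i + 1))) (f (p.2.1 i))) + ε := by
    by_contra h
    push_neg at h
    have hne : Nonempty (ℕ × { u : ℕ → α // Monotone u ∧ ∀ i, u i ∈ Icc a b }) := by
      have := eVariationOn.nonempty_monotone_mem (s := Icc a b) ⟨a, le_refl a, hab.le⟩
      exact ⟨⟨0, Classical.choice this⟩⟩
    have h1 : V + ε ≤ V := by
      rw [hV, eVariationOn, ENNReal.iSup_add]
      exact iSup_le fun p => h p
    exact absurd h1 (not_le.mpr (ENNReal.lt_add_right hfin hε.ne'))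
  obtain ⟨⟨n, u, hu, hus⟩, hp⟩ := hex
  simp only at hp
  by_cases hj : ∃ j, a < u j
  · set j := Nat.find hj with hjdef
    have hj1 : a < u j := Nat.find_spec hj
    have hj2 : ∀ i, i < j → u i = a := fun i hi =>
      le_antisymm (not_lt.mp (Nat.find_min hj hi)) (hus i).1
    -- choose d
    have h1 : ∀ᶠ x in 𝓝[>] a, edist (f x) (f a) < ε := by
      have hc : Filter.Tendsto f (𝓝[>] a) (𝓝 (f a)) :=
        (hf.continuousAt (x := a)).mono_left nhdsWithin_le_nhds
      exact EMetric.tendsto_nhds.mp hc ε hε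
    have h2 : Ioc a (u j) ∈ 𝓝[>] a := Ioc_mem_nhdsGT hj1
    have : Filter.NeBot (𝓝[>] a) := nhdsGT_neBot_of_exists_gt ⟨u j, hj1⟩
    obtain ⟨d, hd1, hd2⟩ := (h1.and (eventually_of_mem h2 fun x hx => hx)).exists
    have had : a < d := hd2.1
    have hduj : d ≤ u j := hd2.2
    have hdb : d ≤ b := hduj.trans (hus j).2
    -- compare sums
    set q : ℕ → α := fun i => max (u i) d with hq
    have hqmono : Monotone q := hu.max monotone_const
    have hqmem : ∀ i, q i ∈ Icc d b := fun i => ⟨le_max_right _ _, max_le (hus i).2 hdb⟩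
    have key : ∀ i, edist (f (u (i + 1))) (f (u i)) ≤
        edist (f (q (i + 1))) (f (q i)) + (if i + 1 = j then edist (f d) (f a) else 0) := by
      intro i
      rcases lt_trichotomy (i + 1) j with h | h | h
      · have hui : u i = a := hj2 i (by omega)
        have hui1 : u (i + 1) = a := hj2 _ h
        simp [hui, hui1]
      · have hui : u i = a := hj2 i (by omega)
        have hqi : q i = d := by rw [hq]; simp [hui, had.le]
        have hqi1 : q (i + 1) = u (i + 1) := by
          rw [hq]; simp only [max_eq_left_iff]
          rw [h]; exact hduj
        rw [if_pos h, hui, hqi, hqi1]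
        exact edist_triangle _ _ _
      · have hji : j ≤ i := by omega
        have hdi : d ≤ u i := hduj.trans (hu hji)
        have hqi : q i = u i := max_eq_left hdi
        have hqi1 : q (i + 1) = u (i + 1) := max_eq_left (hdi.trans (hu (Nat.le_succ i)))
        rw [if_neg (by omega), hqi, hqi1, add_zero]
    have hsum : (∑ i ∈ Finset.range n, edist (f (u (i + 1))) (f (u i))) ≤
        (∑ i ∈ Finset.range n, edist (f (q (i + 1))) (f (q i))) + edist (f d) (f a) := by
      calc (∑ i ∈ Finset.range n, edist (f (u (i + 1))) (f (u i)))
          ≤ ∑ i ∈ Finset.range n, (edist (f (q (i + 1))) (f (q i)) +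
            (if i + 1 = j then edist (f d) (f a) else 0)) := Finset.sum_le_sum fun i _ => key i
        _ = (∑ i ∈ Finset.range n, edist (f (q (i + 1))) (f (q i))) +
            ∑ i ∈ Finset.range n, (if i + 1 = j then edist (f d) (f a) else 0) :=
            Finset.sum_add_distrib
        _ ≤ _ := by
            gcongr
            rcases j with _ | j'
            · simp
            · have : ∀ i, (i + 1 = j' + 1) = (i = j') := fun i => by
                simp [Nat.succ_inj]
              simp only [this]
              rw [Finset.sum_ite_eq' (Finset.range n) j' (fun _ => edist (f d) (f a))]
              split <;> simp
    have hsumq : (∑ i ∈ Finset.range n, edist (f (q (i + 1))) (f (q i))) ≤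
        eVariationOn f (Icc d b) := eVariationOn.sum_le (f := f) (n := n) hqmono hqmem
    -- additivity
    have hadd : eVariationOn f (Icc a d) + eVariationOn f (Icc d b) = V := by
      have := eVariationOn.Icc_add_Icc f (s := Icc a b) had.le hdb ⟨had.le, hdb⟩
      simpa only [Set.Icc_inter_Icc, sup_idem, inf_idem, inf_eq_right.mpr hdb,
        sup_eq_right.mpr had.le] using this
    have hfin2 : eVariationOn f (Icc d b) ≠ ⊤ := by
      refine ne_top_of_le_ne_top hfin (eVariationOn.mono f ?_)
      exact Icc_subset_Icc_left had.le
    have hlt : eVariationOn f (Icc a d) + eVariationOn f (Icc d b) <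
        2 * ε + eVariationOn f (Icc d b) := by
      rw [hadd]
      calc V < (∑ i ∈ Finset.range n, edist (f (u (i + 1))) (f (u i))) + ε := hp
        _ ≤ ((∑ i ∈ Finset.range n, edist (f (q (i + 1))) (f (q i))) + edist (f d) (f a)) + ε :=
            by gcongr
        _ ≤ (eVariationOn f (Icc d b) + ε) + ε := add_le_add (add_le_add hsumq hd1.le) le_rfl
        _ = 2 * ε + eVariationOn f (Icc d b) := by ring
    rw [ENNReal.add_lt_add_iff_right hfin2] at hlt
    exact ⟨d, had, hdb, hlt.le⟩
  · -- no partition point above a : sum is zero, contradiction with ε ≤ V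
    push_neg at hj
    have : ∀ i, u i = a := fun i => le_antisymm (hj i) (hus i).1
    have hz : (∑ i ∈ Finset.range n, edist (f (u (i + 1))) (f (u i))) = 0 := by
      apply Finset.sum_eq_zero
      intro i _
      rw [this i, this (i + 1), edist_self]
    rw [hz, zero_add] at hp
    exact absurd hVsmall (not_le.mpr hp)

lemma evar_tendsto_right {f : α → E} (hf : Continuous f) {a b : α} (hb : ∀ t, t ≤ b)
    (hfin : eVariationOn f (Icc a b) ≠ ⊤) :
    Tendsto (fun t => eVariationOn f (Icc a t)) (𝓝[≥] a) (𝓝 0) := by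
  rw [ENNReal.tendsto_nhds_zero]
  intro ε hε
  rcases eq_or_lt_of_le (hb a) with hab | hab
  · filter_upwards [self_mem_nhdsWithin] with t ht
    have hta : t = a := le_antisymm (hab ▸ hb t) ht
    rw [hta, Set.Icc_self]
    rw [eVariationOn.subsingleton f (Set.subsingleton_singleton)]
    exact zero_le
  · by_cases hεtop : ε = ⊤
    · filter_upwards with t; simp [hεtop]
    obtain ⟨c, hc1, hc2, hc3⟩ := evar_right_small hf hab hfin (ε := ε / 2)
      (ENNReal.half_pos hε.ne')
    have hmem : Ico a c ∈ 𝓝[≥] a := Ico_mem_nhdsGE hc1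
    filter_upwards [hmem] with t ht
    calc eVariationOn f (Icc a t) ≤ eVariationOn f (Icc a c) :=
          eVariationOn.mono f (Icc_subset_Icc_right ht.2.le)
      _ ≤ 2 * (ε / 2) := hc3
      _ = ε := ENNReal.mul_div_cancel two_ne_zero ENNReal.ofNat_ne_top

end Var

noncomputable section PathSel

/-- grid point `i/n` clamped to `[0,1]`. -/
def gridPt (n i : ℕ) : unitInterval :=
  ⟨min ((i : ℝ) / (n : ℝ)) 1, ⟨le_min (by positivity) zero_le_one, min_le_right _ _⟩⟩

lemma gridPt_zero (n : ℕ) : gridPt n 0 = 0 := by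
  apply Subtype.ext
  simp [gridPt]

lemma gridPt_mono (n : ℕ) : Monotone (gridPt n) := by
  intro i j hij
  rw [← Subtype.coe_le_coe]
  exact min_le_min (by gcongr) le_rfl

variable {A : Type*} [CStarAlgebra A]

open scoped Classical in
def pathPick (w : C(unitInterval, A)) (s t : unitInterval) (z : ℂ) : ℂ :=
  if h : ∃ ν, ν ∈ spectrum ℂ (w t) ∧ dist z ν ≤ ‖w s - w t‖ then h.choose else 1

def pathSeq (w : C(unitInterval, A)) (lam₀ : ℂ) (n : ℕ) : ℕ → ℂ
  | 0 => lam₀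
  | i + 1 => pathPick w (gridPt n i) (gridPt n (i + 1)) (pathSeq w lam₀ n i)

lemma pathSeq_spec [Nontrivial A] (w : C(unitInterval, A)) (hw : ∀ t, w t ∈ unitary A)
    (lam₀ : ℂ) (hlam₀ : lam₀ ∈ spectrum ℂ (w 0)) (n : ℕ) : ∀ i : ℕ,
    pathSeq w lam₀ n i ∈ spectrum ℂ (w (gridPt n i)) ∧
      dist (pathSeq w lam₀ n (i + 1)) (pathSeq w lam₀ n i) ≤
        ‖w (gridPt n (i + 1)) - w (gridPt n i)‖ := by
  have key : ∀ i, pathSeq w lam₀ n i ∈ spectrum ℂ (w (gridPt n i)) →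
      (∃ ν, ν ∈ spectrum ℂ (w (gridPt n (i + 1))) ∧
        dist (pathSeq w lam₀ n i) ν ≤ ‖w (gridPt n i) - w (gridPt n (i + 1))‖) := by
    intro i hi
    obtain ⟨ν, hν, hd⟩ := exists_near_spectrum (hw (gridPt n i)) (hw (gridPt n (i + 1))) hi
    exact ⟨ν, hν, hd⟩
  have mem : ∀ i, pathSeq w lam₀ n i ∈ spectrum ℂ (w (gridPt n i)) := by
    intro i
    induction i with
    | zero => rw [gridPt_zero]; exact hlam₀
    | succ i ih =>
        show pathPick w (gridPt n i) (gridPt n (i + 1)) (pathSeq w lam₀ n i) ∈ _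
        rw [pathPick, dif_pos (key i ih)]
        exact (key i ih).choose_spec.1
  intro i
  refine ⟨mem i, ?_⟩
  show dist (pathPick w (gridPt n i) (gridPt n (i + 1)) (pathSeq w lam₀ n i)) _ ≤ _
  rw [pathPick, dif_pos (key i (mem i))]
  exact le_trans (le_of_eq (dist_comm _ _))
    (le_trans (key i (mem i)).choose_spec.2 (le_of_eq (norm_sub_rev _ _)))

end PathSel


section Var2
variable {α : Type*} [LinearOrder α] [TopologicalSpace α] [OrderTopology α] [DenselyOrdered α]
  {E : Type*} [PseudoEMetricSpace E]


lemma evar_icc_dual (f : α → E) (x y : α) :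
    eVariationOn (f ∘ OrderDual.ofDual) (Icc (OrderDual.toDual x) (OrderDual.toDual y)) =
      eVariationOn f (Icc y x) := by
  rw [← eVariationOn.comp_ofDual f (Icc y x)]
  congr 1
  ext z
  simp only [Set.mem_preimage, Set.mem_Icc]
  exact and_comm

lemma evar_tendsto_left {f : α → E} (hf : Continuous f) {a b : α} (hb : ∀ t, b ≤ t)
    (hfin : eVariationOn f (Icc b a) ≠ ⊤) :
    Tendsto (fun t => eVariationOn f (Icc t a)) (𝓝[≤] a) (𝓝 0) := by
  have hd := evar_tendsto_right (α := αᵒᵈ) (f := f ∘ OrderDual.ofDual)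
      (hf.comp (continuous_def.mpr fun s hs => hs))
      (a := OrderDual.toDual a) (b := OrderDual.toDual b) (fun t => hb _)
      (by rw [evar_icc_dual]; exact hfin)
  have hfun : (fun t : αᵒᵈ => eVariationOn (f ∘ OrderDual.ofDual) (Icc (OrderDual.toDual a) t)) =
      fun t : αᵒᵈ => eVariationOn f (Icc (OrderDual.ofDual t) a) :=
    funext fun t => evar_icc_dual f a (OrderDual.ofDual t)
  rw [hfun] at hd
  exact hd

end Var2

section FCont
variable {E : Type*} [PseudoEMetricSpace E]

lemma evar_continuous {f : unitInterval → E} (hf : Continuous f)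
    (hfin : eVariationOn f univ ≠ ⊤) :
    Continuous fun t => (eVariationOn f (Icc 0 t)).toReal := by
  have hfin' : ∀ s t : unitInterval, eVariationOn f (Icc s t) ≠ ⊤ :=
    fun s t => ne_top_of_le_ne_top hfin (eVariationOn.mono f (subset_univ _))
  have hadd : ∀ s t : unitInterval, s ≤ t →
      eVariationOn f (Icc 0 s) + eVariationOn f (Icc s t) = eVariationOn f (Icc 0 t) := by
    intro s t hst
    have := eVariationOn.Icc_add_Icc f (s := univ) (unitInterval.nonneg' (t := s)) hst
      (mem_univ s)
    simpa [Set.univ_inter] using this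
  rw [continuous_iff_continuousAt]
  intro a
  rw [ContinuousAt, ← nhdsLE_sup_nhdsGE a, tendsto_sup]
  constructor
  · have h0 := evar_tendsto_left (b := (0 : unitInterval)) hf
      (fun t => unitInterval.nonneg') (hfin' 0 a)
    have h1 : Tendsto (fun t => (eVariationOn f (Icc t a)).toReal) (𝓝[≤] a) (𝓝 0) := by
      have := (ENNReal.tendsto_toReal (a := 0) (by simp)).comp h0
      simpa [Function.comp_def] using this
    have h2 : Tendsto (fun t => (eVariationOn f (Icc 0 a)).toReal -
        (eVariationOn f (Icc t a)).toReal) (𝓝[≤] a)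
        (𝓝 ((eVariationOn f (Icc 0 a)).toReal - 0)) := tendsto_const_nhds.sub h1
    rw [sub_zero] at h2
    refine Tendsto.congr' ?_ h2
    filter_upwards [self_mem_nhdsWithin] with t ht
    have h3 := hadd t a ht
    have heq : (eVariationOn f (Icc 0 t)).toReal + (eVariationOn f (Icc t a)).toReal =
        (eVariationOn f (Icc 0 a)).toReal := by
      rw [← ENNReal.toReal_add (hfin' _ _) (hfin' _ _), h3]
    linarith
  · have h0 := evar_tendsto_right (b := (1 : unitInterval)) hf
      (fun t => unitInterval.le_one') (hfin' a 1)
    have h1 : Tendsto (fun t => (eVariationOn f (Icc a t)).toReal) (𝓝[≥] a) (𝓝 0) := by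
      have := (ENNReal.tendsto_toReal (a := 0) (by simp)).comp h0
      simpa [Function.comp_def] using this
    have h2 : Tendsto (fun t => (eVariationOn f (Icc 0 a)).toReal +
        (eVariationOn f (Icc a t)).toReal) (𝓝[≥] a)
        (𝓝 ((eVariationOn f (Icc 0 a)).toReal + 0)) := tendsto_const_nhds.add h1
    rw [add_zero] at h2
    refine Tendsto.congr' ?_ h2
    filter_upwards [self_mem_nhdsWithin] with t ht
    have h3 := hadd a t ht
    rw [← ENNReal.toReal_add (hfin' _ _) (hfin' _ _), h3]

end FCont

section Chain
variable {A : Type*} [CStarAlgebra A]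

lemma pathSeq_chain [Nontrivial A] (w : C(unitInterval, A)) (hw : ∀ t, w t ∈ unitary A)
    (lam₀ : ℂ) (hlam₀ : lam₀ ∈ spectrum ℂ (w 0)) (n : ℕ) {i j : ℕ} (hij : i ≤ j) :
    edist (pathSeq w lam₀ n j) (pathSeq w lam₀ n i) ≤
      eVariationOn (⇑w) (Icc (gridPt n i) (gridPt n j)) := by
  have hstep := fun k => (pathSeq_spec w hw lam₀ hlam₀ n k).2
  calc edist (pathSeq w lam₀ n j) (pathSeq w lam₀ n i)
      = edist (pathSeq w lam₀ n i) (pathSeq w lam₀ n j) := edist_comm _ _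
    _ ≤ ∑ k ∈ Finset.Ico i j, edist (pathSeq w lam₀ n k) (pathSeq w lam₀ n (k + 1)) :=
        edist_le_Ico_sum_edist _ hij
    _ ≤ ∑ k ∈ Finset.Ico i j, edist (w (gridPt n (k + 1))) (w (gridPt n k)) := by
        refine Finset.sum_le_sum fun k _ => ?_
        rw [edist_dist, edist_dist]
        refine ENNReal.ofReal_le_ofReal ?_
        rw [dist_comm]
        exact le_trans (hstep k) (le_of_eq (dist_eq_norm _ _).symm)
    _ ≤ eVariationOn (⇑w) (Icc (gridPt n i) (gridPt n j)) := by
        rw [Finset.sum_Ico_eq_sum_range]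
        have hmono : Monotone fun k => gridPt n (min (i + k) j) := by
          intro a b hab
          exact gridPt_mono n (min_le_min (by omega) le_rfl)
        have hmem : ∀ k, gridPt n (min (i + k) j) ∈ Icc (gridPt n i) (gridPt n j) :=
          fun k => ⟨gridPt_mono n (le_min (by omega) hij), gridPt_mono n (min_le_right _ _)⟩
        have hle := eVariationOn.sum_le (f := ⇑w) (n := j - i) hmono hmem
        refine le_trans (le_of_eq ?_) hle
        refine Finset.sum_congr rfl fun k hk => ?_
        rw [Finset.mem_range] at hk
        have h1 : min (i + k) j = i + k := min_eq_left (by omega)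
        have h2 : min (i + (k + 1)) j = i + (k + 1) := min_eq_left (by omega)
        rw [h1, h2]
        norm_num [add_assoc]
end Chain


lemma gridPt_coe (n i : ℕ) : (gridPt n i : ℝ) = min ((i : ℝ) / (n : ℝ)) 1 := rfl

lemma pathSeq_zero {A : Type*} [CStarAlgebra A] (w : C(unitInterval, A)) (lam₀ : ℂ) (n : ℕ) :
    pathSeq w lam₀ n 0 = lam₀ := rfl


/-- Let `A` be a unital C*-algebra and let `w : [0,1] → A` be a continuous
path of unitaries which is rectifiable of length `r ≤ π/2` (the length being the total
variation, i.e. the supremum over partitions of the sums of norms of consecutive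
differences). Then for every `λ` in the spectrum of `w 0` there is a continuous function
`t ↦ λ(t)` into the unit circle with `λ(0) = λ`, `λ(t) ∈ spectrum (w t)` for all `t`, and
whose length (total variation) is at most `r`. -/
theorem spectrum_path_selection_length (A : Type*) [CStarAlgebra A]
    (w : C(unitInterval, A)) (hw : ∀ t, w t ∈ unitary A)
    (r : ℝ) (hr : r ≤ Real.pi / 2)
    (hlen : eVariationOn (⇑w) Set.univ = ENNReal.ofReal r)
    (lam₀ : ℂ) (hlam₀ : lam₀ ∈ spectrum ℂ (w 0)) :
    ∃ lam : C(unitInterval, ℂ), lam 0 = lam₀ ∧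
      (∀ t, ‖lam t‖ = 1) ∧ (∀ t, lam t ∈ spectrum ℂ (w t)) ∧
      eVariationOn (⇑lam) Set.univ ≤ ENNReal.ofReal r := by
  classical
  have hnt : Nontrivial A := by
    by_contra h
    rw [not_nontrivial_iff_subsingleton] at h
    exact spectrum.notMem_iff.mpr (isUnit_of_subsingleton _) hlam₀
  have hfin : eVariationOn (⇑w) univ ≠ ⊤ := by rw [hlen]; exact ENNReal.ofReal_ne_top
  have hIccU : (Icc (0 : unitInterval) 1) = univ := by
    ext t; simp [unitInterval.nonneg', unitInterval.le_one']
  have hfin' : ∀ s t : unitInterval, eVariationOn (⇑w) (Icc s t) ≠ ⊤ :=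
    fun s t => ne_top_of_le_ne_top hfin (eVariationOn.mono _ (subset_univ _))
  set F : unitInterval → ℝ := fun t => (eVariationOn (⇑w) (Icc 0 t)).toReal with hFdef
  have hFc : Continuous F := evar_continuous w.continuous hfin
  have hadd : ∀ s t : unitInterval, s ≤ t →
      eVariationOn (⇑w) (Icc 0 s) + eVariationOn (⇑w) (Icc s t) = eVariationOn (⇑w) (Icc 0 t) := by
    intro s t hst
    have := eVariationOn.Icc_add_Icc (⇑w) (s := univ)
      (unitInterval.nonneg' : (0 : unitInterval) ≤ s) hst (mem_univ s)
    simpa [Set.univ_inter] using this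
  have hFadd : ∀ s t : unitInterval, s ≤ t →
      F t = F s + (eVariationOn (⇑w) (Icc s t)).toReal := by
    intro s t hst
    rw [hFdef]
    dsimp only
    rw [← ENNReal.toReal_add (hfin' 0 s) (hfin' s t), hadd s t hst]
  have hFmono : Monotone F := by
    intro s t hst
    rw [hFadd s t hst]
    exact le_add_of_nonneg_right ENNReal.toReal_nonneg
  have hF0 : 0 ≤ F 0 := ENNReal.toReal_nonneg
  -- the discretization
  set τ : ℕ → unitInterval → unitInterval := fun n t => gridPt n ⌊(t : ℝ) * n⌋₊ with hτdef
  have hτle : ∀ n, 1 ≤ n → ∀ t, τ n t ≤ t := by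
    intro n hn t
    rw [hτdef, ← Subtype.coe_le_coe, gridPt_coe]
    have hn' : (0 : ℝ) < n := by exact_mod_cast hn
    refine min_le_of_left_le ?_
    rw [div_le_iff₀ hn']
    exact Nat.floor_le (mul_nonneg t.2.1 n.cast_nonneg)
  have hτub : ∀ n, 1 ≤ n → ∀ t : unitInterval, (t : ℝ) - 1 / n ≤ (τ n t : ℝ) := by
    intro n hn t
    rw [hτdef, gridPt_coe]
    have hn' : (0 : ℝ) < n := by exact_mod_cast hn
    refine le_min ?_ (by nlinarith [t.2.2, one_div_pos.mpr hn'])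
    rw [le_div_iff₀ hn']
    have hmul : ((t : ℝ) - 1 / n) * n = (t : ℝ) * n - 1 := by field_simp
    rw [hmul]
    linarith [Nat.sub_one_lt_floor ((t : ℝ) * n)]
  have hτtend : ∀ t : unitInterval, Tendsto (fun n => τ n t) atTop (𝓝 t) := by
    intro t
    rw [Metric.tendsto_atTop]
    intro ε hε
    obtain ⟨N, hN⟩ := exists_nat_gt (1 / ε)
    refine ⟨max N 1, fun n hn => ?_⟩
    have hn1 : 1 ≤ n := le_trans (le_max_right _ _) hn
    have hNn : (N : ℝ) ≤ n := Nat.cast_le.mpr (le_trans (le_max_left _ _) hn)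
    have hn' : (0 : ℝ) < n := by exact_mod_cast hn1
    have h1 := hτle n hn1 t
    have h2 := hτub n hn1 t
    rw [Subtype.dist_eq, Real.dist_eq, abs_sub_lt_iff]
    have hNpos : (0 : ℝ) < N := lt_of_le_of_lt (by positivity) hN
    have : 1 / (n : ℝ) < ε := by
      rw [div_lt_iff₀ hn']
      have h3 : 1 / ε < (n : ℝ) := lt_of_lt_of_le hN hNn
      rw [div_lt_iff₀ hε] at h3
      linarith
    constructor
    · have := Subtype.coe_le_coe.mpr h1
      linarith
    · linarith
  -- the ultrafilter and the limit path
  set U : Ultrafilter ℕ := Ultrafilter.of atTop with hUdef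
  have hU : (U : Filter ℕ) ≤ atTop := Ultrafilter.of_le _
  set lamn : ℕ → unitInterval → ℂ := fun n t => pathSeq w lam₀ n ⌊(t : ℝ) * n⌋₊ with hlamndef
  have hmemn : ∀ n t, lamn n t ∈ spectrum ℂ (w (τ n t)) :=
    fun n t => (pathSeq_spec w hw lam₀ hlam₀ n _).1
  have hsph : ∀ n t, lamn n t ∈ Metric.sphere (0 : ℂ) 1 :=
    fun n t => spectrum.subset_circle_of_unitary (hw _) (hmemn n t)
  have hex : ∀ t : unitInterval, ∃ z, Tendsto (fun n => lamn n t) (U : Filter ℕ) (𝓝 z) := by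
    intro t
    have hle : (Ultrafilter.map (fun n => lamn n t) U : Filter ℂ) ≤ 𝓟 (Metric.sphere (0 : ℂ) 1) := by
      rw [Filter.le_principal_iff, Ultrafilter.coe_map, Filter.mem_map]
      exact Filter.univ_mem' fun n => hsph n t
    obtain ⟨z, _, hzle⟩ := (isCompact_sphere (0 : ℂ) 1).ultrafilter_le_nhds
      (Ultrafilter.map (fun n => lamn n t) U) hle
    exact ⟨z, hzle⟩
  choose lam hlim using hex
  -- key distance bound
  have hdistb : ∀ s t : unitInterval, s ≤ t → dist (lam t) (lam s) ≤ F t - F s := by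
    intro s t hst
    have hb : Tendsto (fun n : ℕ => F t - F (τ n s)) (U : Filter ℕ) (𝓝 (F t - F s)) :=
      ((tendsto_const_nhds (x := F t)).sub ((hFc.tendsto s).comp (hτtend s))).mono_left hU
    have hdd : Tendsto (fun n => dist (lamn n t) (lamn n s)) (U : Filter ℕ)
        (𝓝 (dist (lam t) (lam s))) := (hlim t).dist (hlim s)
    refine le_of_tendsto_of_tendsto hdd hb ?_
    have hev : ∀ᶠ n in (U : Filter ℕ), 1 ≤ n := hU (eventually_ge_atTop 1)
    filter_upwards [hev] with n hn
    have hij : ⌊(s : ℝ) * n⌋₊ ≤ ⌊(t : ℝ) * n⌋₊ :=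
      Nat.floor_mono (mul_le_mul_of_nonneg_right (Subtype.coe_le_coe.mpr hst) n.cast_nonneg)
    have hchain := pathSeq_chain w hw lam₀ hlam₀ n hij
    have h1 : dist (lamn n t) (lamn n s) ≤ (eVariationOn (⇑w) (Icc (τ n s) (τ n t))).toReal := by
      rw [dist_edist]
      exact ENNReal.toReal_mono (hfin' _ _) hchain
    refine h1.trans ?_
    have hττ : τ n s ≤ τ n t := gridPt_mono n hij
    have h2 := hFadd (τ n s) (τ n t) hττ
    have h3 := hFmono (hτle n hn t)
    simp only [ge_iff_le]
    linarith
  -- continuity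
  have hlamlip : ∀ t b : unitInterval, dist (lam t) (lam b) ≤ dist (F t) (F b) := by
    intro t b
    rcases le_total t b with h | h
    · rw [dist_comm (lam t)]
      refine (hdistb t b h).trans ?_
      rw [Real.dist_eq, abs_sub_comm]
      exact le_abs_self _
    · refine (hdistb b t h).trans ?_
      rw [Real.dist_eq]
      exact le_abs_self _
  have hlamc : Continuous lam := by
    rw [continuous_iff_continuousAt]
    intro b
    rw [ContinuousAt, Metric.tendsto_nhds]
    intro ε hε
    have hFb : ∀ᶠ t in 𝓝 b, dist (F t) (F b) < ε :=
      Metric.tendsto_nhds.mp (hFc.tendsto b) ε hε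
    filter_upwards [hFb] with t ht
    exact lt_of_le_of_lt (hlamlip t b) ht
  -- membership
  have hmem : ∀ t, lam t ∈ spectrum ℂ (w t) := by
    intro t
    have hclosed : IsClosed (spectrum ℂ (w t)) := spectrum.isClosed _
    have hne : (spectrum ℂ (w t)).Nonempty := spectrum.nonempty _
    have he : Tendsto (fun n => ‖w (τ n t) - w t‖) atTop (𝓝 0) := by
      have h1 : Tendsto (fun n => w (τ n t)) atTop (𝓝 (w t)) :=
        (w.continuous.tendsto t).comp (hτtend t)
      have := (h1.sub (tendsto_const_nhds (x := w t))).norm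
      simpa using this
    have hinf : ∀ n, Metric.infDist (lamn n t) (spectrum ℂ (w t)) ≤ ‖w (τ n t) - w t‖ := by
      intro n
      obtain ⟨ν, hν, hd⟩ := exists_near_spectrum (hw (τ n t)) (hw t) (hmemn n t)
      exact le_trans (Metric.infDist_le_dist_of_mem hν) hd
    have hlimi : Tendsto (fun n => Metric.infDist (lamn n t) (spectrum ℂ (w t)))
        (U : Filter ℕ) (𝓝 (Metric.infDist (lam t) (spectrum ℂ (w t)))) :=
      ((Metric.continuous_infDist_pt _).tendsto _).comp (hlim t)
    have hle0 : Metric.infDist (lam t) (spectrum ℂ (w t)) ≤ 0 :=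
      le_of_tendsto_of_tendsto hlimi (he.mono_left hU) (Filter.Eventually.of_forall hinf)
    have h0 : Metric.infDist (lam t) (spectrum ℂ (w t)) = 0 :=
      le_antisymm hle0 Metric.infDist_nonneg
    exact (IsClosed.mem_iff_infDist_zero hclosed hne).mpr h0
  -- base point
  have hlam0 : lam 0 = lam₀ := by
    have hconst : (fun n => lamn n 0) = fun _ => lam₀ := by
      funext n
      rw [hlamndef]
      dsimp only
      norm_num [pathSeq_zero]
    refine tendsto_nhds_unique (hlim 0) ?_
    rw [hconst]
    exact tendsto_const_nhds
  -- norm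
  have hnorm : ∀ t, ‖lam t‖ = 1 := by
    intro t
    have := spectrum.subset_circle_of_unitary (hw t) (hmem t)
    rwa [mem_sphere_zero_iff_norm] at this
  -- variation bound
  have hvar : eVariationOn lam univ ≤ ENNReal.ofReal r := by
    have hofr : ENNReal.ofReal (F 1) = ENNReal.ofReal r := by
      rw [hFdef]
      dsimp only
      rw [hIccU, ENNReal.ofReal_toReal hfin, hlen]
    rw [eVariationOn]
    refine iSup_le fun p => ?_
    obtain ⟨n, u, hu, hus⟩ := p
    calc (∑ i ∈ Finset.range n, edist (lam (u (i + 1))) (lam (u i)))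
        ≤ ∑ i ∈ Finset.range n, ENNReal.ofReal (F (u (i + 1)) - F (u i)) := by
          refine Finset.sum_le_sum fun i _ => ?_
          rw [edist_dist]
          exact ENNReal.ofReal_le_ofReal (hdistb _ _ (hu (Nat.le_succ i)))
      _ = ENNReal.ofReal (∑ i ∈ Finset.range n, (F (u (i + 1)) - F (u i))) :=
          (ENNReal.ofReal_sum_of_nonneg fun i _ =>
            sub_nonneg.mpr (hFmono (hu (Nat.le_succ i)))).symm
      _ = ENNReal.ofReal (F (u n) - F (u 0)) := by
          rw [Finset.sum_range_sub (fun i => F (u i))]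
      _ ≤ ENNReal.ofReal (F 1) := by
          refine ENNReal.ofReal_le_ofReal ?_
          have h1 : F (u n) ≤ F 1 := hFmono unitInterval.le_one'
          have h2 : F 0 ≤ F (u 0) := hFmono unitInterval.nonneg'
          linarith
      _ = ENNReal.ofReal r := hofr
  exact ⟨⟨lam, hlamc⟩, hlam0, hnorm, hmem, hvar⟩

end SpectrumPathSelection
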